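/- Let (Ω, 𝒜, μ) be a probability space, 𝒢 ⊆ 𝒜 a sub-σ-algebra, and X an integrable real-valued random variable with |X| ≤ 1 almost surely and E[X ∣ 𝒢] ≤ 0 almost surely. Define Y = (X − 1) · E[X ∣ 𝒢] / (1 − E[X ∣ 𝒢]). Then almost surely: Y ≥ 0, |X + Y| ≤ 1, and E[X + Y ∣ 𝒢] = 0. -/

import Mathlib

open MeasureTheory

/-- converting a supermartingale increment into a martingale increment.
If `|X| ≤ 1` a.s. and `E[X ∣ 𝒢] ≤ 0` a.s., then the compensator
`Y = (X − 1)·E[X ∣ 𝒢]/(1 − E[X ∣ 𝒢])` satisfies a.s.: `Y ≥ 0`, `|X + Y| ≤ 1`, and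
`E[X + Y ∣ 𝒢] = 0`. -/
theorem compensator_of_supermartingale_step
    {Ω : Type*} {mΩ : MeasurableSpace Ω} (μ : Measure Ω) [IsProbabilityMeasure μ]
    (𝒢 : MeasurableSpace Ω) (h𝒢 : 𝒢 ≤ mΩ)
    (X : Ω → ℝ) (hX : Integrable X μ)
    (hbd : ∀ᵐ ω ∂μ, |X ω| ≤ 1)
    (hle : ∀ᵐ ω ∂μ, (μ[X|𝒢]) ω ≤ 0) :
    (∀ᵐ ω ∂μ, 0 ≤ (X ω - 1) * (μ[X|𝒢]) ω / (1 - (μ[X|𝒢]) ω)) ∧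
    (∀ᵐ ω ∂μ, |X ω + (X ω - 1) * (μ[X|𝒢]) ω / (1 - (μ[X|𝒢]) ω)| ≤ 1) ∧
    (∀ᵐ ω ∂μ,
      (μ[fun ω' => X ω' + (X ω' - 1) * (μ[X|𝒢]) ω' / (1 - (μ[X|𝒢]) ω')|𝒢]) ω = 0) := by
  set Z : Ω → ℝ := μ[X|𝒢] with hZ
  set g : Ω → ℝ := fun ω => Z ω / (1 - Z ω) with hg
  -- first part
  have h1 : ∀ᵐ ω ∂μ, 0 ≤ (X ω - 1) * Z ω / (1 - Z ω) := by
    filter_upwards [hbd, hle] with ω hb hl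
    have hx1 : X ω ≤ 1 := (abs_le.mp hb).2
    have hpos : (0:ℝ) < 1 - Z ω := by linarith
    apply div_nonneg _ hpos.le
    nlinarith
  refine ⟨h1, ?_, ?_⟩
  · filter_upwards [hbd, hle] with ω hb hl
    have hx1 : X ω ≤ 1 := (abs_le.mp hb).2
    have hx2 : -1 ≤ X ω := (abs_le.mp hb).1
    have hpos : (0:ℝ) < 1 - Z ω := by linarith
    have hne : (1 - Z ω) ≠ 0 := ne_of_gt hpos
    have key : X ω + (X ω - 1) * Z ω / (1 - Z ω) = (X ω - Z ω) / (1 - Z ω) := by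
      field_simp; ring
    rw [key, abs_div, abs_of_pos hpos, div_le_one hpos]
    rw [abs_le]
    constructor <;> linarith
  · -- conditional expectation part
    have hgm : StronglyMeasurable[𝒢] g := by
      have : Measurable[𝒢] g :=
        (stronglyMeasurable_condExp.measurable).div
          (measurable_const.sub stronglyMeasurable_condExp.measurable)
      exact this.stronglyMeasurable
    have hgbd : ∀ᵐ ω ∂μ, ‖g ω‖ ≤ 1 := by
      filter_upwards [hle] with ω hl
      have hpos : (0:ℝ) < 1 - Z ω := by linarith
      rw [Real.norm_eq_abs, abs_div, abs_of_pos hpos, div_le_one hpos]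
      rw [abs_of_nonpos hl]; linarith
    have hX1 : Integrable (fun ω => X ω - 1) μ := hX.sub (integrable_const 1)
    have hY_int : Integrable (fun ω => g ω * (X ω - 1)) μ :=
      hX1.bdd_mul (hgm.mono h𝒢).aestronglyMeasurable hgbd
    have hmul : (μ[g * (fun ω => X ω - 1)|𝒢]) =ᵐ[μ] g * μ[(fun ω => X ω - 1)|𝒢] :=
      condExp_mul_of_stronglyMeasurable_left hgm hY_int hX1
    have hsub : μ[(fun ω => X ω - 1)|𝒢] =ᵐ[μ] fun ω => Z ω - 1 := by
      have := condExp_sub (m := 𝒢) hX (integrable_const (1:ℝ)) (μ := μ)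
      refine this.trans ?_
      rw [condExp_const h𝒢]
      filter_upwards with ω; simp [hZ]
    have hEY : μ[(fun ω => g ω * (X ω - 1))|𝒢] =ᵐ[μ] fun ω => -Z ω := by
      refine hmul.trans ?_
      filter_upwards [hsub, hle] with ω h1 h2
      have hpos : (0:ℝ) < 1 - Z ω := by linarith
      simp only [Pi.mul_apply, h1, hg]
      field_simp
      ring
    have hfeq : (fun ω' => X ω' + (X ω' - 1) * Z ω' / (1 - Z ω'))
        = fun ω' => X ω' + g ω' * (X ω' - 1) := by
      funext ω; simp only [hg]; ring
    have hadd := condExp_add (m := 𝒢) hX hY_int (μ := μ)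
    rw [hfeq]
    calc (μ[fun ω' => X ω' + g ω' * (X ω' - 1)|𝒢])
        =ᵐ[μ] μ[X|𝒢] + μ[(fun ω => g ω * (X ω - 1))|𝒢] := hadd
      _ =ᵐ[μ] fun _ => (0:ℝ) := by
          filter_upwards [hEY] with ω hω
          simp [hω, hZ]
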